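/- For every x ∈ X, the orbit map induces a homeomorphism from the quotient space G/G_x (where G_x is the stabilizer of x) onto the orbit G · x equipped with the subspace topology from τ(X,G). -/

import Mathlib

open TopologicalSpace

theorem quotient_homeomorph_orbit {G X : Type*} [Group G] [TopologicalSpace G]
    [IsTopologicalGroup G] [MulAction G X] (x : X) :
    letI : TopologicalSpace X :=
      generateFrom {s : Set X | ∃ (U : Set G) (x : X), IsOpen U ∧ s = (· • x) '' U}
    ∃ f : (G ⧸ MulAction.stabilizer G x) ≃ₜ MulAction.orbit G x,
      ∀ g : G, (f (QuotientGroup.mk g) : X) = g • x := by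
  letI τ : TopologicalSpace X :=
    generateFrom {s : Set X | ∃ (U : Set G) (x : X), IsOpen U ∧ s = (· • x) '' U}
  show ∃ f : (G ⧸ MulAction.stabilizer G x) ≃ₜ MulAction.orbit G x,
      ∀ g : G, (f (QuotientGroup.mk g) : X) = g • x
  -- the orbit map
  set φ : G → X := fun g => g • x with hφ
  have hφcont : Continuous φ := by
    apply continuous_generateFrom_iff.mpr
    rintro s ⟨U, y, hU, rfl⟩
    rw [isOpen_iff_forall_mem_open]
    rintro g₀ hg₀
    obtain ⟨u₀, hu₀, hu₀eq⟩ := hg₀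
    refine ⟨(· * (u₀⁻¹ * g₀)) '' U, ?_, (isOpenMap_mul_right _ U hU), ⟨u₀, hu₀, by
      simp [φ]⟩⟩
    rintro g ⟨u, hu, rfl⟩
    refine ⟨u, hu, ?_⟩
    simp only [φ, mul_smul]
    rw [show (g₀ : G) • x = u₀ • y from hu₀eq.symm]
    simp [← mul_smul]
  have hφorbit : ∀ g, φ g ∈ MulAction.orbit G x := fun g => ⟨g, rfl⟩
  set φ' : G → MulAction.orbit G x := fun g => ⟨φ g, hφorbit g⟩ with hφ'
  have hφ'cont : Continuous φ' := hφcont.subtype_mk _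
  have hφ'open : IsOpenMap φ' := by
    intro U hU
    have h1 : IsOpen ((· • x) '' U : Set X) := GenerateOpen.basic _ ⟨U, x, hU, rfl⟩
    have h2 : φ' '' U = Subtype.val ⁻¹' ((· • x) '' U) := by
      ext ⟨z, hz⟩
      simp [φ', φ, Set.mem_image]
    rw [h2]
    exact h1.preimage continuous_subtype_val
  -- the equivalence
  set e : (G ⧸ MulAction.stabilizer G x) ≃ MulAction.orbit G x :=
    (MulAction.orbitEquivQuotientStabilizer G x).symm with he
  have hemk : ∀ g : G, e (QuotientGroup.mk g) = φ' g := fun g =>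
    Subtype.ext (MulAction.orbitEquivQuotientStabilizer_symm_apply G x g)
  have hcomp : (e : (G ⧸ MulAction.stabilizer G x) → MulAction.orbit G x) ∘
      (QuotientGroup.mk : G → G ⧸ MulAction.stabilizer G x) = φ' := by
    funext g; exact hemk g
  have hmk := QuotientGroup.isQuotientMap_mk (MulAction.stabilizer G x)
  have hecont : Continuous e := by
    rw [hmk.continuous_iff, hcomp]; exact hφ'cont
  have heopen : IsOpenMap e := by
    intro V hV
    have hVpre : IsOpen ((QuotientGroup.mk : G → G ⧸ MulAction.stabilizer G x) ⁻¹' V) :=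
      hV.preimage hmk.continuous
    have himg : e '' V = φ' '' ((QuotientGroup.mk : G → G ⧸ MulAction.stabilizer G x) ⁻¹' V) := by
      rw [← hcomp, Set.image_comp]
      rw [Set.image_preimage_eq V QuotientGroup.mk_surjective]
    rw [himg]
    exact hφ'open _ hVpre
  refine ⟨Equiv.toHomeomorphOfContinuousOpen e hecont heopen, fun g => ?_⟩
  show ((e (QuotientGroup.mk g)) : X) = g • x
  rw [hemk g]
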